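/- Let H be a real inner product space, x : ι → H a family of points, and let A, B, C be pairwise disjoint nonempty finite subsets of ι. Then Ward's linkage satisfies the Lance–Williams update formula: δ(A ∪ B, C) = ((|A|+|C|)·δ(A,C) + (|B|+|C|)·δ(B,C) − |C|·δ(A,B)) / (|A|+|B|+|C|). -/

import Mathlib

open Finset

/-- The centroid `x̄_C = (1/|C|) ∑_{i∈C} x_i` of the cluster `C`. -/
noncomputable def centroid {ι H : Type*} [NormedAddCommGroup H] [InnerProductSpace ℝ H]
    (x : ι → H) (C : Finset ι) : H :=
  (C.card : ℝ)⁻¹ • ∑ i ∈ C, x i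

/-- The inertia (error sum of squares) `I(C) = ∑_{i∈C} ‖x_i − x̄_C‖²` of the cluster `C`. -/
noncomputable def inertia {ι H : Type*} [NormedAddCommGroup H] [InnerProductSpace ℝ H]
    (x : ι → H) (C : Finset ι) : ℝ :=
  ∑ i ∈ C, ‖x i - centroid x C‖ ^ 2

/-- The similarity sum `S(C) = ∑_{(i,j)∈C×C} ⟨x_i, x_j⟩` of the cluster `C`. -/
noncomputable def simSum {ι H : Type*} [NormedAddCommGroup H] [InnerProductSpace ℝ H]
    (x : ι → H) (C : Finset ι) : ℝ :=
  ∑ i ∈ C, ∑ j ∈ C, (inner ℝ (x i) (x j) : ℝ)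

/-- Ward's linkage `δ(C,C') = I(C ∪ C') − I(C) − I(C')`. -/
noncomputable def ward {ι H : Type*} [DecidableEq ι] [NormedAddCommGroup H]
    [InnerProductSpace ℝ H] (x : ι → H) (C C' : Finset ι) : ℝ :=
  inertia x (C ∪ C') - inertia x C - inertia x C'

noncomputable def crossSum {ι H : Type*} [NormedAddCommGroup H] [InnerProductSpace ℝ H]
    (x : ι → H) (C C' : Finset ι) : ℝ :=
  ∑ i ∈ C, ∑ j ∈ C', (inner ℝ (x i) (x j) : ℝ)

lemma simSum_eq {ι H : Type*} [NormedAddCommGroup H] [InnerProductSpace ℝ H]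
    (x : ι → H) (C : Finset ι) :
    simSum x C = (inner ℝ (∑ i ∈ C, x i) (∑ i ∈ C, x i) : ℝ) := by
  rw [sum_inner]
  exact Finset.sum_congr rfl fun i _ => by rw [inner_sum]

lemma inertia_eq {ι H : Type*} [NormedAddCommGroup H] [InnerProductSpace ℝ H]
    (x : ι → H) (C : Finset ι) (hC : C.Nonempty) :
    inertia x C = (∑ i ∈ C, ‖x i‖ ^ 2) - (C.card : ℝ)⁻¹ * simSum x C := by
  have hn : (C.card : ℝ) ≠ 0 := Nat.cast_ne_zero.2 hC.card_ne_zero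
  set s := ∑ i ∈ C, x i with hs
  have key : ∀ i ∈ C, ‖x i - centroid x C‖ ^ 2
      = ‖x i‖ ^ 2 - 2 * (C.card : ℝ)⁻¹ * (inner ℝ (x i) s : ℝ)
        + (C.card : ℝ)⁻¹ ^ 2 * (inner ℝ s s : ℝ) := by
    intro i _
    rw [norm_sub_sq_real, _root_.centroid, inner_smul_right, norm_smul, ← hs]
    simp [mul_pow, norm_inv, abs_of_nonneg (by positivity : (0:ℝ) ≤ (C.card:ℝ)),
      real_inner_smul_left, real_inner_smul_right, real_inner_self_eq_norm_sq]
    ring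
  have h2 : ∑ i ∈ C, 2 * (C.card : ℝ)⁻¹ * (inner ℝ (x i) s : ℝ)
      = 2 * (C.card : ℝ)⁻¹ * (inner ℝ s s : ℝ) := by
    rw [← Finset.mul_sum, ← sum_inner]
  rw [inertia, Finset.sum_congr rfl key, Finset.sum_add_distrib, Finset.sum_sub_distrib,
    Finset.sum_const, nsmul_eq_mul, h2, simSum_eq]
  field_simp
  ring

lemma simSum_union {ι H : Type*} [DecidableEq ι] [NormedAddCommGroup H] [InnerProductSpace ℝ H]
    (x : ι → H) (C C' : Finset ι) (h : Disjoint C C') :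
    simSum x (C ∪ C') = simSum x C + simSum x C' + 2 * crossSum x C C' := by
  rw [simSum_eq, simSum_eq, simSum_eq, Finset.sum_union h, inner_add_add_self,
    real_inner_comm (∑ i ∈ C', x i) (∑ i ∈ C, x i)]
  have : (inner ℝ (∑ i ∈ C', x i) (∑ i ∈ C, x i) : ℝ) = crossSum x C C' := by
    rw [real_inner_comm, sum_inner]
    exact Finset.sum_congr rfl fun i _ => by rw [inner_sum]
  rw [this]; ring

lemma ward_eq {ι H : Type*} [DecidableEq ι] [NormedAddCommGroup H] [InnerProductSpace ℝ H]
    (x : ι → H) (C C' : Finset ι) (hC : C.Nonempty) (hC' : C'.Nonempty) (h : Disjoint C C') :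
    (inertia x (C ∪ C') - inertia x C - inertia x C') =
      (C.card : ℝ)⁻¹ * simSum x C + (C'.card : ℝ)⁻¹ * simSum x C'
        - ((C.card : ℝ) + C'.card)⁻¹ *
          (simSum x C + simSum x C' + 2 * crossSum x C C') := by
  rw [inertia_eq x C hC, inertia_eq x C' hC', inertia_eq x (C ∪ C') (hC.mono subset_union_left),
    Finset.sum_union h, simSum_union x C C' h, Finset.card_union_of_disjoint h]
  push_cast
  ring

theorem ward_lanceWilliams'
    {ι H : Type*} [DecidableEq ι] [NormedAddCommGroup H] [InnerProductSpace ℝ H]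
    (x : ι → H) (A B C : Finset ι)
    (hA : A.Nonempty) (hB : B.Nonempty) (hC : C.Nonempty)
    (hAB : Disjoint A B) (hAC : Disjoint A C) (hBC : Disjoint B C) :
    (inertia x ((A ∪ B) ∪ C) - inertia x (A ∪ B) - inertia x C) =
      ((A.card + C.card : ℝ) * (inertia x (A ∪ C) - inertia x A - inertia x C)
        + (B.card + C.card : ℝ) * (inertia x (B ∪ C) - inertia x B - inertia x C)
        - (C.card : ℝ) * (inertia x (A ∪ B) - inertia x A - inertia x B))
        / (A.card + B.card + C.card : ℝ) := by
  have hABd : Disjoint (A ∪ B) C := disjoint_union_left.2 ⟨hAC, hBC⟩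
  have ha : (0:ℝ) < A.card := by exact_mod_cast hA.card_pos
  have hb : (0:ℝ) < B.card := by exact_mod_cast hB.card_pos
  have hc : (0:ℝ) < C.card := by exact_mod_cast hC.card_pos
  have hcross : crossSum x (A ∪ B) C = crossSum x A C + crossSum x B C :=
    Finset.sum_union hAB
  rw [ward_eq x (A ∪ B) C (hA.mono subset_union_left) hC hABd,
      ward_eq x A C hA hC hAC, ward_eq x B C hB hC hBC, ward_eq x A B hA hB hAB,
      simSum_union x A B hAB, Finset.card_union_of_disjoint hAB, hcross]
  push_cast
  have h1 : (A.card : ℝ) ≠ 0 := ha.ne'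
  have h2 : (B.card : ℝ) ≠ 0 := hb.ne'
  have h3 : (C.card : ℝ) ≠ 0 := hc.ne'
  have h4 : (A.card : ℝ) + B.card ≠ 0 := by positivity
  have h5 : (A.card : ℝ) + C.card ≠ 0 := by positivity
  have h6 : (B.card : ℝ) + C.card ≠ 0 := by positivity
  have h7 : (A.card : ℝ) + B.card + C.card ≠ 0 := by positivity
  field_simp
  ring

/-- Lance–Williams update formula for Ward's linkage:
`δ(A ∪ B, C) = ((|A|+|C|)·δ(A,C) + (|B|+|C|)·δ(B,C) − |C|·δ(A,B)) / (|A|+|B|+|C|)`. -/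
theorem ward_lanceWilliams
    {ι H : Type*} [DecidableEq ι] [NormedAddCommGroup H] [InnerProductSpace ℝ H]
    (x : ι → H) (A B C : Finset ι)
    (hA : A.Nonempty) (hB : B.Nonempty) (hC : C.Nonempty)
    (hAB : Disjoint A B) (hAC : Disjoint A C) (hBC : Disjoint B C) :
    ward x (A ∪ B) C =
      ((A.card + C.card : ℝ) * ward x A C + (B.card + C.card : ℝ) * ward x B C
        - (C.card : ℝ) * ward x A B) / (A.card + B.card + C.card : ℝ) := by
  simp only [ward]
  exact ward_lanceWilliams' x A B C hA hB hC hAB hAC hBC
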